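/- Let U_A, U_B be unitaries on a Hilbert space and |ψ⟩ a unit vector such that either [U_A, U_B]|ψ⟩ = 0 or {U_A, U_B}|ψ⟩ = 0. Then after applying the switch V followed by Hadamard on the control, with initial state |+⟩⊗|ψ⟩, the control qubit is in state |0⟩ (up to phase and tensoring with a unit target state) in the commuting case and |1⟩ in the anticommuting case; in particular the two cases are perfectly distinguished by a computational-basis measurement of the control. -/

import Mathlib

set_option synthInstance.maxHeartbeats 1000000

/- We model `C² ⊗ H_t` as `WithLp 2 (H × H)`, where `(a, b)` represents
`|0⟩ ⊗ a + |1⟩ ⊗ b`.  If `[U_A,U_B]|ψ⟩ = 0`, the final state after the switch `V`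
and Hadamard on the control has vanishing `|1⟩`-component and a unit-norm
`|0⟩`-component (i.e. it is `|0⟩` tensored with a unit target state, up to phase);
in the anticommuting case the roles are swapped, so a computational-basis
measurement of the control perfectly distinguishes the two cases. -/
theorem stmt7 {H : Type*} [NormedAddCommGroup H] [InnerProductSpace ℂ H] [CompleteSpace H]
    (UA UB : H →L[ℂ] H)
    (hUA : UA ∈ unitary (H →L[ℂ] H)) (hUB : UB ∈ unitary (H →L[ℂ] H))
    (ψ : H) (hψ : ‖ψ‖ = 1)
    (V Had : WithLp 2 (H × H) →L[ℂ] WithLp 2 (H × H))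
    (hV : ∀ φ : WithLp 2 (H × H),
      (V φ).ofLp.1 = UB (UA φ.ofLp.1) ∧ (V φ).ofLp.2 = UA (UB φ.ofLp.2))
    (hHad : ∀ φ : WithLp 2 (H × H),
      (Had φ).ofLp.1 = ((Real.sqrt 2 : ℂ))⁻¹ • (φ.ofLp.1 + φ.ofLp.2) ∧
      (Had φ).ofLp.2 = ((Real.sqrt 2 : ℂ))⁻¹ • (φ.ofLp.1 - φ.ofLp.2))
    -- `p` is the initial state `|+⟩_c ⊗ |ψ⟩_t`
    (p : WithLp 2 (H × H))
    (hp1 : p.ofLp.1 = ((Real.sqrt 2 : ℂ))⁻¹ • ψ) (hp2 : p.ofLp.2 = ((Real.sqrt 2 : ℂ))⁻¹ • ψ) :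
    -- commuting case: control ends in `|0⟩`
    (UA (UB ψ) - UB (UA ψ) = 0 →
      (Had (V p)).ofLp.2 = 0 ∧ ‖(Had (V p)).ofLp.1‖ = 1) ∧
    -- anticommuting case: control ends in `|1⟩`
    (UA (UB ψ) + UB (UA ψ) = 0 →
      (Had (V p)).ofLp.1 = 0 ∧ ‖(Had (V p)).ofLp.2‖ = 1) := by
  set c : ℂ := ((Real.sqrt 2 : ℂ))⁻¹ with hc
  have hcc : c * c = (2:ℂ)⁻¹ := by
    rw [hc, ← mul_inv]
    norm_cast
    rw [Real.mul_self_sqrt (by norm_num)]; norm_num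
  have h1 : (V p).ofLp.1 = c • UB (UA ψ) := by
    rw [(hV p).1, hp1, map_smul, map_smul]
  have h2 : (V p).ofLp.2 = c • UA (UB ψ) := by
    rw [(hV p).2, hp2, map_smul, map_smul]
  have hH1 : (Had (V p)).ofLp.1 = (2:ℂ)⁻¹ • (UB (UA ψ) + UA (UB ψ)) := by
    rw [(hHad (V p)).1, h1, h2, ← smul_add, smul_smul, hcc]
  have hH2 : (Had (V p)).ofLp.2 = (2:ℂ)⁻¹ • (UB (UA ψ) - UA (UB ψ)) := by
    rw [(hHad (V p)).2, h1, h2, ← smul_sub, smul_smul, hcc]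
  have hnorm : ‖UB (UA ψ)‖ = 1 := by
    rw [ContinuousLinearMap.norm_map_of_mem_unitary hUB,
      ContinuousLinearMap.norm_map_of_mem_unitary hUA, hψ]
  constructor
  · intro h
    have he : UA (UB ψ) = UB (UA ψ) := by
      have := sub_eq_zero.mp h; exact this
    constructor
    · rw [hH2, he, sub_self, smul_zero]
    · rw [hH1, he]
      have : UB (UA ψ) + UB (UA ψ) = (2:ℂ) • UB (UA ψ) := by
        rw [two_smul]
      rw [this, smul_smul, inv_mul_cancel₀ (by norm_num), one_smul, hnorm]
  · intro h
    have he : UA (UB ψ) = -UB (UA ψ) := by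
      exact eq_neg_of_add_eq_zero_left h
    constructor
    · rw [hH1, he, add_neg_cancel, smul_zero]
    · rw [hH2, he, sub_neg_eq_add]
      have : UB (UA ψ) + UB (UA ψ) = (2:ℂ) • UB (UA ψ) := by
        rw [two_smul]
      rw [this, smul_smul, inv_mul_cancel₀ (by norm_num), one_smul, hnorm]
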